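/- Suppose v : ℤ → ℂ^k represents a point of the skew shaped positroid S°_{λ/μ}, and suppose (a,i) and (a+1,i) are adjacent boxes in the i-th row of the boundary ribbon R(λ/μ), that is, i = λ̄_a and μ̄_{a+1} < i ≤ λ̄_{a+1} with 1 ≤ a ≤ n−k−1. Then V(a,i) = V(a+1,i). -/

import Mathlib

/-- The height `λ̄_a` of the `a`-th column (counted from the right) of the
partition `f = (f 1 ≥ ⋯ ≥ f k)` inside the `k × (n-k)` rectangle. -/
def colHeight (n k : ℕ) (f : ℕ → ℕ) (a : ℕ) : ℕ :=
  ((Finset.Icc 1 k).filter (fun i => n - k - a + 1 ≤ f i)).card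

/-- `b_i = n - k - μ_i + i`. -/
def bvec (n k : ℕ) (m : ℕ → ℕ) (i : ℕ) : ℕ := n - k - m i + i

/-- The short label `J(a,i) = {min (a+j-1) (b_j) : j = 1, …, i}`. -/
def shortLabel (n k : ℕ) (m : ℕ → ℕ) (a i : ℕ) : Finset ℕ :=
  (Finset.Icc 1 i).image (fun j => min (a + j - 1) (bvec n k m j))

/-- The label `I'(a,i) = J(a,i) ∪ {b_{i+1}, …, b_k}`. -/
def fullLabel (n k : ℕ) (m : ℕ → ℕ) (a i : ℕ) : Finset ℕ :=
  shortLabel n k m a i ∪ (Finset.Icc (i + 1) k).image (bvec n k m)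

/-- `I_μ = {b_1, …, b_k}`. -/
def Imu (n k : ℕ) (m : ℕ → ℕ) : Finset ℕ := (Finset.Icc 1 k).image (bvec n k m)

/-- The box `(a,i)` belongs to the skew diagram `λ/μ`. -/
def InSkew (n k : ℕ) (l m : ℕ → ℕ) (a i : ℕ) : Prop :=
  1 ≤ a ∧ a ≤ n - k ∧ 1 ≤ i ∧ i ≤ k ∧ colHeight n k m a < i ∧ i ≤ colHeight n k l a

/-- The box `(a,i)` belongs to the boundary ribbon `R(λ/μ)`. -/
def InRibbon (n k : ℕ) (l m : ℕ → ℕ) (a i : ℕ) : Prop :=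
  InSkew n k l m a i ∧ (a = 1 ∨ colHeight n k l (a - 1) ≤ i)

/-- `S` is the `r`-th entry of the Grassmann necklace `I_{λ/μ}`. -/
def IsNecklaceEntry (n k : ℕ) (l m : ℕ → ℕ) (r : ℕ) (S : Finset ℕ) : Prop :=
  (∃ a i, InRibbon n k l m a i ∧ r = a + i - 1 ∧ S = fullLabel n k m a i) ∨
  ((¬ ∃ a i, InRibbon n k l m a i ∧ r = a + i - 1) ∧ S = Imu n k m)

/-- The family `{v_j : j ∈ S}` is a basis of `ℂ^k`. -/
def IsBasisFam (k : ℕ) (v : ℤ → Fin k → ℂ) (S : Finset ℕ) : Prop :=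
  LinearIndependent ℂ (fun j : ↥S => v ((j : ℕ) : ℤ)) ∧
  Submodule.span ℂ ((fun j : ℕ => v (j : ℤ)) '' (S : Set ℕ)) = ⊤

/-- `v : ℤ → ℂ^k` represents a point of the skew shaped positroid `S°_{λ/μ}`. -/
def RepsPoint (n k : ℕ) (l m : ℕ → ℕ) (v : ℤ → Fin k → ℂ) : Prop :=
  (∀ j : ℤ, v (j + (n : ℤ)) = ((-1 : ℂ) ^ (k - 1)) • v j) ∧
  (∀ r ∈ Finset.Icc 1 n, ∀ S : Finset ℕ, IsNecklaceEntry n k l m r S → IsBasisFam k v S) ∧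
  (∀ a : ℕ, 1 ≤ a → a ≤ n - k →
    v ((a + colHeight n k m a : ℕ) : ℤ) ∈
      Submodule.span ℂ ((fun j : ℕ => v (j : ℤ)) ''
        ↑(Finset.Icc (a + colHeight n k m a + 1) (a + colHeight n k l a))))

/-- `V(a,i) = span{v_j : j ∈ J(a,i)}`. -/
noncomputable def Vspace (n k : ℕ) (m : ℕ → ℕ) (v : ℤ → Fin k → ℂ) (a i : ℕ) :
    Submodule ℂ (Fin k → ℂ) :=
  Submodule.span ℂ ((fun j : ℕ => v (j : ℤ)) '' ↑(shortLabel n k m a i))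

/-- `W^op_p = span(v_{b_1}, …, v_{b_p})`. -/
noncomputable def Wop (n k : ℕ) (m : ℕ → ℕ) (v : ℤ → Fin k → ℂ) (p : ℕ) :
    Submodule ℂ (Fin k → ℂ) :=
  Submodule.span ℂ ((fun j : ℕ => v (j : ℤ)) '' ↑((Finset.Icc 1 p).image (bvec n k m)))

/-- `W_p = span(v_{b_{k-p+1}}, …, v_{b_k})`. -/
noncomputable def Wsp (n k : ℕ) (m : ℕ → ℕ) (v : ℤ → Fin k → ℂ) (p : ℕ) :
    Submodule ℂ (Fin k → ℂ) :=
  Submodule.span ℂ ((fun j : ℕ => v (j : ℤ)) '' ↑((Finset.Icc (k - p + 1) k).image (bvec n k m)))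


lemma dc_card (k : ℕ) (S : Finset ℕ) (hS : S ⊆ Finset.Icc 1 k)
    (hdc : ∀ x ∈ S, ∀ y, 1 ≤ y → y ≤ x → y ∈ S) (j : ℕ) (hj : 1 ≤ j) :
    j ∈ S ↔ j ≤ S.card := by
  constructor
  · intro hjS
    have hsub : Finset.Icc 1 j ⊆ S := by
      intro y hy
      rw [Finset.mem_Icc] at hy
      exact hdc j hjS y hy.1 hy.2
    have := Finset.card_le_card hsub
    simpa [Nat.card_Icc] using this
  · intro hjc
    by_contra hjS
    have hsub : S ⊆ Finset.Icc 1 (j - 1) := by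
      intro x hx
      have hx1 := hS hx
      rw [Finset.mem_Icc] at hx1 ⊢
      refine ⟨hx1.1, ?_⟩
      by_contra hcon
      push_neg at hcon
      exact hjS (hdc x hx j hj (by omega))
    have := Finset.card_le_card hsub
    rw [Nat.card_Icc] at this
    omega

lemma colHeight_iff (n k : ℕ) (f : ℕ → ℕ)
    (hf : ∀ i j, 1 ≤ i → i ≤ j → j ≤ k → f j ≤ f i) (a j : ℕ) (hj : 1 ≤ j) (hjk : j ≤ k) :
    j ≤ colHeight n k f a ↔ n - k - a + 1 ≤ f j := by
  have hdc : ∀ x ∈ (Finset.Icc 1 k).filter (fun i => n - k - a + 1 ≤ f i),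
      ∀ y, 1 ≤ y → y ≤ x → y ∈ (Finset.Icc 1 k).filter (fun i => n - k - a + 1 ≤ f i) := by
    intro x hx y hy1 hyx
    rw [Finset.mem_filter, Finset.mem_Icc] at hx ⊢
    exact ⟨⟨hy1, le_trans hyx hx.1.2⟩, le_trans hx.2 (hf y x hy1 hyx hx.1.2)⟩
  have hch := dc_card k _ (Finset.filter_subset _ _) hdc j hj
  rw [colHeight, ← hch, Finset.mem_filter, Finset.mem_Icc]
  constructor
  · exact fun h => h.2
  · exact fun h => ⟨⟨hj, hjk⟩, h⟩

lemma colHeight_le_k (n k : ℕ) (f : ℕ → ℕ) (a : ℕ) : colHeight n k f a ≤ k := by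
  rw [colHeight]
  have := Finset.card_filter_le (Finset.Icc 1 k) (fun i => n - k - a + 1 ≤ f i)
  rw [Nat.card_Icc] at this
  omega

lemma colHeight_mono_a (n k : ℕ) (f : ℕ → ℕ) {a a' : ℕ} (h : a ≤ a') :
    colHeight n k f a ≤ colHeight n k f a' := by
  apply Finset.card_le_card
  intro x hx
  rw [Finset.mem_filter] at hx ⊢
  exact ⟨hx.1, by omega⟩

theorem stmt12 (n k : ℕ) (l m : ℕ → ℕ)
    (hk : 0 < k) (hkn : k < n)
    (hlmono : ∀ i j, 1 ≤ i → i ≤ j → j ≤ k → l j ≤ l i)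
    (hl1 : l 1 ≤ n - k)
    (hmmono : ∀ i j, 1 ≤ i → i ≤ j → j ≤ k → m j ≤ m i)
    (hml : ∀ i, 1 ≤ i → i ≤ k → m i ≤ l i)
    (v : ℤ → Fin k → ℂ) (hv : RepsPoint n k l m v)
    (a i : ℕ) (ha1 : 1 ≤ a) (ha2 : a ≤ n - k - 1)
    (hi : i = colHeight n k l a)
    (h1 : colHeight n k m (a + 1) < i) (h2 : i ≤ colHeight n k l (a + 1)) :
    Vspace n k m v a i = Vspace n k m v (a + 1) i := by
  have hik : i ≤ k := hi ▸ colHeight_le_k n k l a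
  have hi1 : 1 ≤ i := by omega
  set p := colHeight n k m a with hp
  have hpq : p ≤ colHeight n k m (a + 1) := colHeight_mono_a n k m (by omega)
  have hpi : p < i := lt_of_le_of_lt hpq h1
  have hm_ub : ∀ j, 1 ≤ j → j ≤ k → m j ≤ n - k := by
    intro j hj1 hj2
    exact le_trans (le_trans (hmmono 1 j le_rfl hj1 hj2) (hml 1 le_rfl hk)) hl1
  have hchar : ∀ j, 1 ≤ j → j ≤ k → (j ≤ p ↔ n - k - a + 1 ≤ m j) := by
    intro j hj hjk
    rw [hp]
    exact colHeight_iff n k m hmmono a j hj hjk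
  have hble : ∀ j, 1 ≤ j → j ≤ p → bvec n k m j ≤ a + j - 1 := by
    intro j hj hjp
    have hjk : j ≤ k := by omega
    have hc := (hchar j hj hjk).1 hjp
    have hu := hm_ub j hj hjk
    unfold bvec
    omega
  have hbge : ∀ j, 1 ≤ j → j ≤ k → p < j → a + j ≤ bvec n k m j := by
    intro j hj hjk hpj
    have hc : ¬ (n - k - a + 1 ≤ m j) := fun h => absurd ((hchar j hj hjk).2 h) (by omega)
    have hu := hm_ub j hj hjk
    unfold bvec
    omega
  -- membership lemmas
  have hmemA2 : ∀ s, p + 1 ≤ s → s ≤ i → a + s ∈ shortLabel n k m (a + 1) i := by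
    intro s hs1 hs2
    rw [shortLabel, Finset.mem_image]
    refine ⟨s, Finset.mem_Icc.mpr ⟨by omega, hs2⟩, ?_⟩
    have := hbge s (by omega) (le_trans hs2 hik) (by omega)
    omega
  have hmemB2 : ∀ j, 1 ≤ j → j ≤ p → bvec n k m j ∈ shortLabel n k m (a + 1) i := by
    intro j hj hjp
    rw [shortLabel, Finset.mem_image]
    refine ⟨j, Finset.mem_Icc.mpr ⟨hj, by omega⟩, ?_⟩
    have := hble j hj hjp
    omega
  -- inclusion
  have hincl : Vspace n k m v a i ≤ Vspace n k m v (a + 1) i := by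
    simp only [Vspace]
    rw [Submodule.span_le]
    rintro _ ⟨x, hx, rfl⟩
    rw [Finset.mem_coe, shortLabel, Finset.mem_image] at hx
    obtain ⟨j, hjm, rfl⟩ := hx
    rw [Finset.mem_Icc] at hjm
    obtain ⟨hj1, hj2⟩ := hjm
    by_cases hjp : j ≤ p
    · have heq : min (a + j - 1) (bvec n k m j) = bvec n k m j := by
        have := hble j hj1 hjp; omega
      rw [heq]
      exact Submodule.subset_span ⟨bvec n k m j, Finset.mem_coe.mpr (hmemB2 j hj1 hjp), rfl⟩
    · have heq : min (a + j - 1) (bvec n k m j) = a + j - 1 := by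
        have := hbge j hj1 (le_trans hj2 hik) (by omega); omega
      rw [heq]
      by_cases hj3 : j = p + 1
      · subst hj3
        rw [show a + (p + 1) - 1 = a + p by omega]
        have h22 := hv.2.2 a ha1 (by omega)
        rw [← hp, ← hi] at h22
        have hle : Submodule.span ℂ ((fun j : ℕ => v (j : ℤ)) '' ↑(Finset.Icc (a + p + 1) (a + i)))
            ≤ Submodule.span ℂ ((fun j : ℕ => v (j : ℤ)) '' ↑(shortLabel n k m (a + 1) i)) := by
          apply Submodule.span_mono
          apply Set.image_mono
          intro t ht
          rw [Finset.mem_coe, Finset.mem_Icc] at ht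
          have := hmemA2 (t - a) (by omega) (by omega)
          rw [show a + (t - a) = t by omega] at this
          exact Finset.mem_coe.mpr this
        exact hle h22
      · have hmem := hmemA2 (j - 1) (by omega) (by omega)
        rw [show a + (j - 1) = a + j - 1 by omega] at hmem
        exact Submodule.subset_span ⟨a + j - 1, Finset.mem_coe.mpr hmem, rfl⟩
  -- strict monotonicity / injectivity
  have key : ∀ a', a ≤ a' → a' ≤ a + 1 → ∀ x y, 1 ≤ x → x < y → y ≤ i →
      min (a' + x - 1) (bvec n k m x) < min (a' + y - 1) (bvec n k m y) := by
    intro a' ha'1 ha'2 x y hx hxy hyi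
    have hyk : y ≤ k := le_trans hyi hik
    have hxk : x ≤ k := by omega
    by_cases hxp : x ≤ p
    · have hbx := hble x hx hxp
      by_cases hyp : y ≤ p
      · have hby := hble y (by omega) hyp
        have hmx : m y ≤ m x := hmmono x y hx (le_of_lt hxy) hyk
        have hux := hm_ub x hx hxk
        have huy := hm_ub y (by omega) hyk
        unfold bvec at *
        omega
      · have hby := hbge y (by omega) hyk (by omega)
        omega
    · have hbx := hbge x hx hxk (by omega)
      have hby := hbge y (by omega) hyk (by omega)
      omega
  have hinj : ∀ a', a ≤ a' → a' ≤ a + 1 →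
      Set.InjOn (fun j => min (a' + j - 1) (bvec n k m j)) ↑(Finset.Icc 1 i) := by
    intro a' h1' h2' x hx y hy hxy
    rw [Finset.mem_coe, Finset.mem_Icc] at hx hy
    rcases lt_trichotomy x y with h | h | h
    · exact absurd hxy (ne_of_lt (key a' h1' h2' x y hx.1 h hy.2))
    · exact h
    · exact absurd hxy.symm (ne_of_lt (key a' h1' h2' y x hy.1 h hx.2))
  have hcard1 : (shortLabel n k m a i).card = i := by
    rw [shortLabel, Finset.card_image_of_injOn (hinj a le_rfl (by omega)), Nat.card_Icc]
    omega
  have hcard2 : (shortLabel n k m (a + 1) i).card = i := by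
    rw [shortLabel, Finset.card_image_of_injOn (hinj (a + 1) (by omega) le_rfl), Nat.card_Icc]
    omega
  -- ribbon and necklace
  have hrib1 : InRibbon n k l m a i := by
    refine ⟨⟨ha1, by omega, hi1, hik, ?_, le_of_eq hi⟩, Or.inr ?_⟩
    · rw [← hp]; exact hpi
    · calc colHeight n k l (a - 1) ≤ colHeight n k l a := colHeight_mono_a n k l (by omega)
        _ = i := hi.symm
  have hne1 : IsNecklaceEntry n k l m (a + i - 1) (fullLabel n k m a i) :=
    Or.inl ⟨a, i, hrib1, rfl, rfl⟩
  have hbasis1 := hv.2.1 (a + i - 1) (Finset.mem_Icc.mpr ⟨by omega, by omega⟩) _ hne1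
  have li0 := hbasis1.1
  have hsub1 : shortLabel n k m a i ⊆ fullLabel n k m a i := Finset.subset_union_left
  have li1 : LinearIndependent ℂ (fun j : ↥(shortLabel n k m a i) => v ((j : ℕ) : ℤ)) := by
    have := li0.comp (fun x : ↥(shortLabel n k m a i) =>
      (⟨x.1, hsub1 x.2⟩ : ↥(fullLabel n k m a i)))
      (fun x y hxy => by have h := congrArg Subtype.val hxy; exact Subtype.ext h)
    exact this
  have himg : (fun j : ℕ => v (j : ℤ)) '' ↑(shortLabel n k m a i)
      = Set.range (fun j : ↥(shortLabel n k m a i) => v ((j : ℕ) : ℤ)) := by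
    ext y
    constructor
    · rintro ⟨x, hx, rfl⟩; exact ⟨⟨x, hx⟩, rfl⟩
    · rintro ⟨⟨x, hx⟩, rfl⟩; exact ⟨x, hx, rfl⟩
  have hfr1 : Module.finrank ℂ (Vspace n k m v a i) = i := by
    show Module.finrank ℂ (Submodule.span ℂ ((fun j : ℕ => v (j : ℤ)) '' ↑(shortLabel n k m a i))) = i
    rw [himg, finrank_span_eq_card li1, Fintype.card_coe, hcard1]
  have hub : Module.finrank ℂ (Vspace n k m v (a + 1) i) ≤ i := by
    show Module.finrank ℂ (Submodule.span ℂ ((fun j : ℕ => v (j : ℤ)) '' ↑(shortLabel n k m (a + 1) i))) ≤ i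
    rw [← Finset.coe_image]
    refine le_trans (finrank_span_finset_le_card _) ?_
    exact le_trans Finset.card_image_le (le_of_eq hcard2)
  refine Submodule.eq_of_le_of_finrank_le hincl ?_
  rw [hfr1]
  exact hub
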